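/- arXiv:2106.02356 — 4 statements merged into one kernel-verified Lean document; each statement's English description precedes it below -/
import Mathlib

section
/- If Λ is uniform on [-1/2, 1/2], its R-transform (defined by R(z) = G^{-1}(z) - 1/z, where G(z) = log((2z+1)/(2z-1))) equals R(z) = (1/2)·coth(z/2) - 1/z, and hence its free cumulants satisfy κ_k = 0 for odd k and κ_k = B_k/k! for even k, where B_k is the k-th Bernoulli number. -/
lemma my_bernoulli_bound (n : ℕ) : |bernoulli n| ≤ 2 ^ n * (Nat.factorial n : ℚ) := by
  induction n using Nat.strong_induction_on with
  | _ n ih =>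
    rcases n with _ | m
    · simp
    set n := m + 1 with hn
    have hrec := sum_bernoulli (n + 1)
    rw [if_neg (by omega), Finset.sum_range_succ, Nat.choose_succ_self_right] at hrec
    have hb : bernoulli n = -(∑ k ∈ Finset.range n, ((n+1).choose k : ℚ) * bernoulli k) / (n + 1) := by
      have : ((n : ℚ) + 1) ≠ 0 := by positivity
      field_simp
      push_cast at hrec ⊢
      linarith [hrec]
    have hterm : ∀ k ∈ Finset.range n, |((n+1).choose k : ℚ) * bernoulli k|
        ≤ ((n+1).factorial : ℚ) / 2 * 2 ^ k := by
      intro k hk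
      have hk' : k < n := Finset.mem_range.1 hk
      have h1 : (n+1).choose k * k.factorial * 2 ≤ (n+1).factorial := by
        have h2 : 2 ≤ (n + 1 - k).factorial := by
          have : 2 ≤ n + 1 - k := by omega
          calc (2:ℕ) = Nat.factorial 2 := rfl
            _ ≤ (n+1-k).factorial := Nat.factorial_le this
        calc (n+1).choose k * k.factorial * 2 ≤ (n+1).choose k * k.factorial * (n+1-k).factorial := by
              exact Nat.mul_le_mul_left _ h2
          _ = (n+1).factorial := Nat.choose_mul_factorial_mul_factorial (by omega)
      have h1' : ((n+1).choose k : ℚ) * k.factorial ≤ ((n+1).factorial : ℚ) / 2 := by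
        rw [le_div_iff₀ (by norm_num)]
        exact_mod_cast h1
      calc |((n+1).choose k : ℚ) * bernoulli k| = ((n+1).choose k : ℚ) * |bernoulli k| := by
            rw [abs_mul, abs_of_nonneg (by positivity)]
        _ ≤ ((n+1).choose k : ℚ) * (2 ^ k * k.factorial) := by
            exact mul_le_mul_of_nonneg_left (ih k (by omega)) (by positivity)
        _ = ((n+1).choose k : ℚ) * k.factorial * 2 ^ k := by ring
        _ ≤ ((n+1).factorial : ℚ) / 2 * 2 ^ k := by
            exact mul_le_mul_of_nonneg_right h1' (by positivity)
    have hsum : |∑ k ∈ Finset.range n, ((n+1).choose k : ℚ) * bernoulli k|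
        ≤ ((n+1).factorial : ℚ) / 2 * (2 ^ n - 1) := by
      calc |∑ k ∈ Finset.range n, ((n+1).choose k : ℚ) * bernoulli k|
          ≤ ∑ k ∈ Finset.range n, |((n+1).choose k : ℚ) * bernoulli k| :=
            Finset.abs_sum_le_sum_abs _ _
        _ ≤ ∑ k ∈ Finset.range n, ((n+1).factorial : ℚ) / 2 * 2 ^ k :=
            Finset.sum_le_sum hterm
        _ = ((n+1).factorial : ℚ) / 2 * ∑ k ∈ Finset.range n, 2 ^ k := by
            rw [Finset.mul_sum]
        _ = ((n+1).factorial : ℚ) / 2 * (2 ^ n - 1) := by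
            rw [geom_sum_eq (by norm_num)]; norm_num
    rw [hb, abs_div, abs_neg, abs_of_nonneg (by positivity : (0:ℚ) ≤ (n:ℚ)+1)]
    rw [div_le_iff₀ (by positivity)]
    have hfact : ((n+1).factorial : ℚ) = (n + 1) * n.factorial := by
      rw [Nat.factorial_succ]; push_cast; ring
    calc |∑ k ∈ Finset.range n, ((n+1).choose k : ℚ) * bernoulli k|
        ≤ ((n+1).factorial : ℚ) / 2 * (2 ^ n - 1) := hsum
      _ ≤ 2 ^ n * n.factorial * ((n:ℚ) + 1) := by
          rw [hfact]
          have h2 : (1:ℚ) ≤ 2 ^ n := one_le_pow₀ (by norm_num)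
          have h3 : (0:ℚ) < n.factorial := by positivity
          nlinarith [h3, h2, sq_nonneg ((2:ℚ)^n)]


lemma coeff_zero_of_hasSum_zero {δ : ℝ} (hδ : 0 < δ) {a : ℕ → ℝ}
    (h : ∀ z ∈ Set.Ioo (0:ℝ) δ, HasSum (fun i => a i * z ^ i) 0) : a 0 = 0 := by
  obtain ⟨r, hr, hrδ2⟩ : ∃ r : ℝ, 0 < r ∧ 2 * r < δ := ⟨δ/4, by positivity, by linarith⟩
  have hrδ : r ∈ Set.Ioo (0:ℝ) δ := ⟨hr, by linarith⟩
  have hsum := (h r hrδ).summable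
  obtain ⟨C0, hC0⟩ : BddAbove (Set.range fun i => |a i * r ^ i|) :=
    (hsum.tendsto_atTop_zero.abs.bddAbove_range)
  obtain ⟨C, hC, hCb⟩ : ∃ C : ℝ, 0 < C ∧ ∀ i, |a i| * r ^ i ≤ C := by
    refine ⟨C0 + 1, ?_, ?_⟩
    · have h0 := hC0 (Set.mem_range_self 0)
      have : (0:ℝ) ≤ C0 := le_trans (abs_nonneg _) h0
      linarith
    · intro i
      have := hC0 (Set.mem_range_self i)
      rw [abs_mul, abs_of_nonneg (by positivity : (0:ℝ) ≤ r ^ i)] at this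
      linarith
  have key : ∀ z ∈ Set.Ioo (0:ℝ) (r/2), |a 0| ≤ 2 * C / r * z := by
    intro z hz
    obtain ⟨hz0, hzr⟩ := hz
    have hzr' : z < r := by linarith
    have hzio : z ∈ Set.Ioo (0:ℝ) δ := ⟨hz0, by linarith⟩
    have h1 : HasSum (fun n => a (n+1) * z ^ (n+1)) (0 - ∑ i ∈ Finset.range 1, a i * z ^ i) :=
      (hasSum_nat_add_iff' (f := fun i => a i * z ^ i) 1).2 (h z hzio)
    simp only [Finset.sum_range_one, pow_zero, mul_one, zero_sub] at h1
    have hq1 : z / r < 1 := (div_lt_one hr).2 hzr'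
    have hq0 : 0 ≤ z / r := by positivity
    have hbound : ∀ n : ℕ, ‖a (n+1) * z ^ (n+1)‖ ≤ (C * (z/r)) * (z/r) ^ n := by
      intro n
      have h2 : |a (n+1)| ≤ C / r ^ (n+1) := by
        rw [le_div_iff₀ (pow_pos hr _)]; exact hCb (n+1)
      have h3 : ‖a (n+1) * z ^ (n+1)‖ = |a (n+1)| * z ^ (n+1) := by
        rw [Real.norm_eq_abs, abs_mul, abs_of_nonneg (by positivity : (0:ℝ) ≤ z ^ (n+1))]
      rw [h3]
      calc |a (n+1)| * z ^ (n+1) ≤ C / r ^ (n+1) * z ^ (n+1) :=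
            mul_le_mul_of_nonneg_right h2 (by positivity)
        _ = (C * (z/r)) * (z/r) ^ n := by
            rw [div_pow]
            rw [pow_succ, pow_succ]
            field_simp
    have hgeo : HasSum (fun n : ℕ => (C * (z/r)) * (z/r) ^ n) ((C * (z/r)) * (1 - z/r)⁻¹) :=
      (hasSum_geometric_of_lt_one hq0 hq1).mul_left _
    have habs : ‖-(a 0)‖ ≤ (C * (z/r)) * (1 - z/r)⁻¹ :=
      h1.norm_le_of_bounded hgeo hbound
    rw [norm_neg, Real.norm_eq_abs] at habs
    have hhalf : (1 - z/r)⁻¹ ≤ 2 := by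
      have hzr2 : z / r < 1/2 := by
        rw [div_lt_iff₀ hr]; linarith
      have h4 : (1:ℝ)/2 ≤ 1 - z/r := by linarith
      calc (1 - z/r)⁻¹ ≤ ((1:ℝ)/2)⁻¹ := by
            apply inv_anti₀ (by norm_num) h4
        _ = 2 := by norm_num
    calc |a 0| ≤ (C * (z/r)) * (1 - z/r)⁻¹ := habs
      _ ≤ (C * (z/r)) * 2 := by
          apply mul_le_mul_of_nonneg_left hhalf (by positivity)
      _ = 2 * C / r * z := by ring
  by_contra hne
  have ha0 : 0 < |a 0| := abs_pos.2 hne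
  set z := min (r/4) (|a 0| * r / (8 * C)) with hzdef
  have hz0 : 0 < z := lt_min (by linarith) (by positivity)
  have hzmem : z ∈ Set.Ioo (0:ℝ) (r/2) := ⟨hz0, lt_of_le_of_lt (min_le_left _ _) (by linarith)⟩
  have hk := key z hzmem
  have hz2 : z ≤ |a 0| * r / (8 * C) := min_le_right _ _
  have hfin : |a 0| ≤ 2 * C / r * (|a 0| * r / (8 * C)) :=
    le_trans hk (mul_le_mul_of_nonneg_left hz2 (by positivity))
  have heq : 2 * C / r * (|a 0| * r / (8 * C)) = |a 0| / 4 := by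
    field_simp
    ring
  rw [heq] at hfin
  linarith

lemma coeff_unique_zero {δ : ℝ} (hδ : 0 < δ) :
    ∀ (i : ℕ) (a : ℕ → ℝ), (∀ z ∈ Set.Ioo (0:ℝ) δ, HasSum (fun i => a i * z ^ i) 0) → a i = 0 := by
  intro i
  induction i with
  | zero => exact fun a h => coeff_zero_of_hasSum_zero hδ h
  | succ i ih =>
    intro a h
    have h0 : a 0 = 0 := coeff_zero_of_hasSum_zero hδ h
    have h' : ∀ z ∈ Set.Ioo (0:ℝ) δ, HasSum (fun j => a (j+1) * z ^ j) 0 := by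
      intro z hz
      have hz0 : z ≠ 0 := ne_of_gt hz.1
      have h1 : HasSum (fun j => a (j+1) * z ^ (j+1)) (0 - ∑ i ∈ Finset.range 1, a i * z ^ i) :=
        (hasSum_nat_add_iff' (f := fun i => a i * z ^ i) 1).2 (h z hz)
      simp only [Finset.sum_range_one, pow_zero, mul_one, h0, zero_sub, mul_zero, zero_mul,
        neg_zero, mul_one, sub_zero] at h1
      have h2 := h1.mul_right z⁻¹
      rw [zero_mul] at h2
      have heq : (fun j => a (j+1) * z ^ (j+1) * z⁻¹) = fun j => a (j+1) * z ^ j := by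
        funext j
        rw [pow_succ]
        field_simp
      rwa [heq] at h2
    exact ih _ h'


lemma bern_conv (n : ℕ) :
    ∑ k ∈ Finset.range n, bernoulli k / ((k.factorial : ℚ) * ((n-k).factorial : ℚ))
      = if n = 1 then 1 else 0 := by
  have h : ∀ k ∈ Finset.range n, bernoulli k / ((k.factorial : ℚ) * ((n-k).factorial : ℚ))
      = ((n.choose k : ℚ) * bernoulli k) / n.factorial := by
    intro k hk
    have hk' : k ≤ n := le_of_lt (Finset.mem_range.1 hk)
    have key : ((n.choose k : ℚ)) * (k.factorial * (n-k).factorial) = n.factorial := by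
      have := Nat.choose_mul_factorial_mul_factorial hk'
      push_cast [← this]
      ring
    have hC0 : ((n.choose k : ℚ)) ≠ 0 := by
      exact_mod_cast (Nat.choose_pos hk').ne'
    rw [mul_comm ((n.choose k : ℚ)) (bernoulli k), ← key]
    rw [mul_comm ((n.choose k : ℚ)) ((k.factorial : ℚ) * ((n-k).factorial : ℚ))]
    rw [mul_comm (bernoulli k) ((n.choose k : ℚ)), mul_comm ((k.factorial : ℚ) * ((n-k).factorial : ℚ)) ((n.choose k : ℚ))]
    exact (mul_div_mul_left _ _ hC0).symm
  rw [Finset.sum_congr rfl h, ← Finset.sum_div, sum_bernoulli]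
  split_ifs with h1
  · subst h1; norm_num
  · simp

lemma cauchy_term (z : ℝ) (n : ℕ) :
    ∑ k ∈ Finset.range (n+1),
      ((bernoulli k : ℝ)/(k.factorial : ℝ) * z^k) *
        (if n - k = 0 then 0 else z^(n-k)/((n-k).factorial : ℝ))
      = if n = 1 then z else 0 := by
  rw [Finset.sum_range_succ]
  rw [Nat.sub_self]
  simp only [if_pos rfl, mul_zero, add_zero]
  have h : ∀ k ∈ Finset.range n,
      ((bernoulli k : ℝ)/(k.factorial : ℝ) * z^k) *
        (if n - k = 0 then 0 else z^(n-k)/((n-k).factorial : ℝ))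
      = ((bernoulli k : ℝ) / ((k.factorial : ℝ) * ((n-k).factorial : ℝ))) * z ^ n := by
    intro k hk
    have hk' : k < n := Finset.mem_range.1 hk
    rw [if_neg (by omega)]
    rw [show z ^ n = z ^ k * z ^ (n - k) by rw [← pow_add, Nat.add_sub_cancel' (le_of_lt hk')]]
    ring
  rw [Finset.sum_congr rfl h, ← Finset.sum_mul]
  have hcast : ∑ k ∈ Finset.range n, ((bernoulli k : ℝ) / ((k.factorial : ℝ) * ((n-k).factorial : ℝ)))
      = if n = 1 then 1 else 0 := by
    have := bern_conv n
    have h2 := congrArg (fun q : ℚ => (q : ℝ)) this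
    push_cast at h2
    convert h2 using 1
    split_ifs <;> norm_num
  rw [hcast]
  split_ifs with h1
  · subst h1; norm_num
  · simp



noncomputable def myc : ℕ → ℝ :=
  fun n => if n = 0 then 0 else (bernoulli (n+1) : ℝ)/(((n+1).factorial : ℕ) : ℝ)

set_option maxHeartbeats 1000000 in
lemma bern_series (z : ℝ) (hz0 : 0 < z) (hz : z < 1/4) :
    HasSum (fun n : ℕ => myc n * z ^ n)
      ((Real.exp z + 1)/(2*(Real.exp z - 1)) - 1/z) := by
  simp only [myc]
  set f : ℕ → ℝ := fun n => (bernoulli n : ℝ)/(n.factorial : ℝ) * z ^ n with hfdef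
  set g : ℕ → ℝ := fun n => if n = 0 then 0 else z^n/(n.factorial : ℝ) with hgdef
  have hfnorm : Summable fun n => ‖f n‖ := by
    apply Summable.of_nonneg_of_le (f := fun n => (2*z)^n) (fun n => norm_nonneg _)
    · intro n
      have hb : |(bernoulli n : ℝ)| ≤ 2 ^ n * (n.factorial : ℝ) := by
        have := my_bernoulli_bound n
        have h2 : |((bernoulli n : ℚ) : ℝ)| ≤ (((2:ℚ) ^ n * (n.factorial : ℚ) : ℚ) : ℝ) := by
          rw [← Rat.cast_abs]
          exact_mod_cast this
        push_cast at h2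
        exact h2
      have hfac : (0:ℝ) < (n.factorial : ℝ) := by positivity
      calc ‖f n‖ = |(bernoulli n : ℝ)| / (n.factorial : ℝ) * z ^ n := by
            rw [hfdef]
            simp only [Real.norm_eq_abs, abs_mul, abs_div, abs_of_nonneg (le_of_lt hfac),
              abs_of_nonneg (by positivity : (0:ℝ) ≤ z ^ n)]
        _ ≤ (2 ^ n * (n.factorial : ℝ)) / (n.factorial : ℝ) * z ^ n := by
            gcongr
        _ = (2*z)^n := by
            rw [mul_div_assoc, div_self (ne_of_gt hfac), mul_one, mul_pow]
    · exact summable_geometric_of_lt_one (by positivity) (by linarith)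
  have hf : HasSum f (∑' n, f n) := hfnorm.of_norm.hasSum
  set S := ∑' n, f n with hSdef
  have hgnorm : Summable fun n => ‖g n‖ := by
    apply Summable.of_nonneg_of_le (f := fun n => z^n/(n.factorial : ℝ)) (fun n => norm_nonneg _)
    · intro n
      rw [hgdef]
      dsimp only
      split_ifs with h
      · simp; positivity
      · rw [Real.norm_eq_abs, abs_of_nonneg (by positivity)]
    · exact Real.summable_pow_div_factorial z
  have hg : HasSum g (Real.exp z - 1) := by
    have hexp : HasSum (fun n => z ^ n / (n.factorial : ℝ)) (Real.exp z) := by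
      have := NormedSpace.exp_series_hasSum_exp' (𝕂 := ℝ) z
      rw [Real.exp_eq_exp_ℝ]
      convert this using 2 with n
      · exact rfl
      rw [smul_eq_mul]
      ring
    have hone : HasSum (fun n : ℕ => if n = 0 then (1:ℝ) else 0) 1 := hasSum_ite_eq 0 1
    have := hexp.sub hone
    convert this using 2 with n
    · exact rfl
    rw [hgdef]
    dsimp only
    split_ifs with h
    · subst h; norm_num
    · ring
  have hprod : HasSum (fun n => ∑ k ∈ Finset.range (n+1), f k * g (n-k)) (S * (Real.exp z - 1)) := by
    have := hasSum_sum_range_mul_of_summable_norm hfnorm hgnorm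
    rwa [← hSdef, hg.tsum_eq] at this
  have hterm : (fun n => ∑ k ∈ Finset.range (n+1), f k * g (n-k)) =
      fun n => if n = 1 then z else 0 := by
    funext n
    exact cauchy_term z n
  rw [hterm] at hprod
  have hz' : HasSum (fun n : ℕ => if n = 1 then z else 0) z := hasSum_ite_eq 1 z
  have hSz : S * (Real.exp z - 1) = z := hprod.unique hz'
  have he1 : (1:ℝ) < Real.exp z := by
    rw [← Real.exp_zero]; exact Real.exp_lt_exp.2 hz0
  have hene : Real.exp z - 1 ≠ 0 := by linarith
  have hzne : z ≠ 0 := ne_of_gt hz0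
  -- shift the series
  have h1 : HasSum (fun n => f (n+1)) (S - ∑ i ∈ Finset.range 1, f i) :=
    (hasSum_nat_add_iff' (f := f) 1).2 hf
  have hf0 : f 0 = 1 := by rw [hfdef]; simp
  rw [Finset.sum_range_one, hf0] at h1
  have h2 := h1.mul_right z⁻¹
  have heq2 : (fun n => f (n+1) * z⁻¹) = fun n => (bernoulli (n+1) : ℝ)/(((n+1).factorial : ℕ) : ℝ) * z ^ n := by
    funext n
    rw [hfdef]
    dsimp only
    rw [pow_succ]
    field_simp
  rw [heq2] at h2
  have hsingle : HasSum (fun n : ℕ => if n = 0 then (1/2 : ℝ) else 0) (1/2) := hasSum_ite_eq 0 _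
  have h3 := h2.add hsingle
  have heq3 : (fun n => (bernoulli (n+1) : ℝ)/(((n+1).factorial : ℕ) : ℝ) * z ^ n
        + (if n = 0 then (1/2 : ℝ) else 0))
      = fun n : ℕ => (if n = 0 then 0 else (bernoulli (n+1) : ℝ)/(((n+1).factorial : ℕ) : ℝ)) * z ^ n := by
    funext n
    split_ifs with h
    · subst h
      have : (bernoulli 1 : ℝ) = -1/2 := by
        rw [bernoulli_one]; push_cast; ring
      simp [this]
      norm_num
    · ring
  rw [heq3] at h3
  convert h3 using 1
  · exact rfl
  have hSval : S = z / (Real.exp z - 1) := by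
    field_simp at hSz ⊢
    linarith [hSz]
  rw [hSval]
  field_simp
  ring


set_option maxHeartbeats 1000000 in
/-- For `Λ` uniform on `[-1/2,1/2]`, with Cauchy transform
`G(z) = log((2z+1)/(2z-1))`, the R-transform `R(z) = G⁻¹(z) - 1/z` equals
`(1/2)·coth(z/2) - 1/z`; hence the free cumulants (the coefficients of
`R(z) = Σ κ_{i+1} z^i`) satisfy `κ_k = 0` for odd `k` and `κ_k = B_k/k!`
for even `k`. -/
theorem stmt2
    (G Ginv R : ℝ → ℝ) (δ : ℝ) (hδ : 0 < δ)
    (hG : ∀ z : ℝ, 1 / 2 < z → G z = Real.log ((2 * z + 1) / (2 * z - 1)))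
    (hGinv : ∀ z ∈ Set.Ioo (0 : ℝ) δ, 1 / 2 < Ginv z ∧ G (Ginv z) = z)
    (hR : ∀ z : ℝ, z ≠ 0 → R z = Ginv z - 1 / z)
    (κ : ℕ → ℝ)
    (hκ : ∀ z ∈ Set.Ioo (0 : ℝ) δ, HasSum (fun i : ℕ => κ (i + 1) * z ^ i) (R z)) :
    (∀ z ∈ Set.Ioo (0 : ℝ) δ,
        R z = (1 / 2) * (Real.cosh (z / 2) / Real.sinh (z / 2)) - 1 / z) ∧
    (∀ k : ℕ, 1 ≤ k → Odd k → κ k = 0) ∧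
    (∀ k : ℕ, 1 ≤ k → Even k → κ k = (bernoulli k : ℝ) / (Nat.factorial k : ℝ)) := by
  have part1 : ∀ z ∈ Set.Ioo (0:ℝ) δ,
      R z = (1/2) * (Real.cosh (z/2)/Real.sinh (z/2)) - 1/z ∧
      R z = (Real.exp z + 1)/(2*(Real.exp z - 1)) - 1/z := by
    intro z hz
    obtain ⟨hz0, hzδ⟩ := hz
    obtain ⟨hg, hGz⟩ := hGinv z ⟨hz0, hzδ⟩
    have hden : 0 < 2 * Ginv z - 1 := by linarith
    have hnum : 0 < 2 * Ginv z + 1 := by linarith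
    have hu : 0 < (2 * Ginv z + 1)/(2 * Ginv z - 1) := by positivity
    have hE : Real.exp z = (2 * Ginv z + 1)/(2 * Ginv z - 1) := by
      conv_lhs => rw [← hGz]
      rw [hG (Ginv z) hg, Real.exp_log hu]
    have hE' : Real.exp z * (2 * Ginv z - 1) = 2 * Ginv z + 1 := by
      rw [hE]; field_simp
    have hE1 : 1 < Real.exp z := by
      rw [← Real.exp_zero]; exact Real.exp_lt_exp.2 hz0
    have hgval : 2 * Ginv z * (Real.exp z - 1) = Real.exp z + 1 := by
      linear_combination hE'
    have hsinhpos : 0 < Real.sinh (z/2) := Real.sinh_pos_iff.2 (by linarith)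
    have hw0 : Real.exp (z/2) ≠ 0 := (Real.exp_pos _).ne'
    have hww : Real.exp (z/2) * Real.exp (z/2) = Real.exp z := by
      rw [← Real.exp_add]; congr 1; ring
    have hsne : Real.sinh (z/2) ≠ 0 := ne_of_gt hsinhpos
    have hcs : (1/2) * (Real.cosh (z/2)/Real.sinh (z/2)) = Ginv z := by
      have key : Real.cosh (z/2) = 2 * Ginv z * Real.sinh (z/2) := by
        rw [Real.cosh_eq, Real.sinh_eq, Real.exp_neg]
        field_simp
        linear_combination (-1) * hgval + (1 - 2 * Ginv z) * hww
      rw [key, mul_div_assoc, div_self hsne]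
      ring
    have hRz := hR z (ne_of_gt hz0)
    constructor
    · rw [hRz, hcs]
    · rw [hRz]
      have hene : Real.exp z - 1 ≠ 0 := by linarith
      have : Ginv z = (Real.exp z + 1)/(2*(Real.exp z - 1)) := by
        rw [eq_div_iff (by positivity)]
        linear_combination hgval
      rw [this]
  have hδ' : 0 < min δ (1/4) := lt_min hδ (by norm_num)
  have hκc : ∀ i, κ (i+1) = myc i := by
    have huniq := coeff_unique_zero (δ := min δ (1/4)) hδ'
    intro i
    have hz0 := huniq i (fun j => κ (j+1) - myc j) ?_
    · linarith [hz0]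
    · intro z hz
      obtain ⟨hz0, hzδ'⟩ := hz
      have hzδ : z < δ := lt_of_lt_of_le hzδ' (min_le_left _ _)
      have hz4 : z < 1/4 := lt_of_lt_of_le hzδ' (min_le_right _ _)
      have h1 := hκ z ⟨hz0, hzδ⟩
      have h2 := bern_series z hz0 hz4
      rw [← (part1 z ⟨hz0, hzδ⟩).2] at h2
      have h3 := h1.sub h2
      have heq : (fun i => κ (i+1) * z ^ i - myc i * z ^ i) = fun i => (κ (i+1) - myc i) * z ^ i := by
        funext i; ring
      rw [heq, sub_self] at h3
      exact h3
  refine ⟨fun z hz => (part1 z hz).1, ?_, ?_⟩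
  · intro k hk hodd
    obtain ⟨j, rfl⟩ : ∃ j, k = j + 1 := ⟨k-1, by omega⟩
    rw [hκc j]
    by_cases hj : j = 0
    · simp [myc, hj]
    · have hb : bernoulli (j+1) = 0 := by
        rw [bernoulli_eq_bernoulli'_of_ne_one (by omega)]
        exact bernoulli'_eq_zero_of_odd hodd (by omega)
      simp [myc, hj, hb]
  · intro k hk heven
    obtain ⟨j, rfl⟩ : ∃ j, k = j + 1 := ⟨k-1, by omega⟩
    have hj : j ≠ 0 := by rintro rfl; simp [Nat.even_iff] at heven
    rw [hκc j]
    simp [myc, hj]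
end

section
/- Under the same setting, if additionally κ_k ≥ 0 for all k ≥ 2 and ξ ∈ (0,1) is such that R'(1/(ξα))(1/(ξα))² < 1, then for the weighted norm ‖x‖_ξ = sup_{s,t≤0} ξ^{max(|s|,|t|)}|x_{s,t}|, the map h satisfies the Lipschitz bound ‖h(x) - h(y)‖_ξ ≤ R'(1/(ξα))(1/(ξα))² · ‖x - y‖_ξ for all x, y with finite ‖·‖_ξ norm; i.e., h is a contraction on (X_{I*}, ‖·‖_ξ). -/
/-- The limit map `h` is a contraction in the weighted sup-norm
`‖x‖_ξ = sup_{s,t≤0} ξ^{max(|s|,|t|)}|x_{s,t}|`: if `κ_k ≥ 0` for `k ≥ 2`, `ξ ∈ (0,1)`,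
`L := R'(1/(ξα))(1/(ξα))² < 1`, and `ξ^{max(|s|,|t|)}|x_{s,t} - y_{s,t}| ≤ M` for all
nonpositive `s,t`, then `ξ^{max(|s|,|t|)}|h(x)_{s,t} - h(y)_{s,t}| ≤ L·M`. -/
theorem stmt4
    (κ : ℕ → ℝ) (α ξ : ℝ)
    (hκ : ∀ k : ℕ, 2 ≤ k → 0 ≤ κ k)
    (hα : 0 < α) (hξ0 : 0 < ξ) (hξ1 : ξ < 1)
    (hconv : Summable (fun p : ℕ × ℕ => κ (p.1 + p.2 + 2) * (1 / (ξ * α)) ^ (p.1 + p.2)))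
    (hcontr :
      (∑' p : ℕ × ℕ, κ (p.1 + p.2 + 2) * (1 / (ξ * α)) ^ (p.1 + p.2)) * (1 / (ξ * α)) ^ 2 < 1)
    (c : ℝ) (hc : 0 ≤ c)
    (x y : ℤ → ℤ → ℝ) (M : ℝ)
    (hxy : ∀ s t : ℤ, s ≤ 0 → t ≤ 0 →
      ξ ^ (max s.natAbs t.natAbs) * |x s t - y s t| ≤ M) :
    ∀ s t : ℤ, s ≤ 0 → t ≤ 0 →
      ξ ^ (max s.natAbs t.natAbs) *
        |(∑' p : ℕ × ℕ, κ (p.1 + p.2 + 2) * (1 / α) ^ (p.1 + p.2 + 2) *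
              (c + x (s - (p.1 : ℤ)) (t - (p.2 : ℤ)))) -
         (∑' p : ℕ × ℕ, κ (p.1 + p.2 + 2) * (1 / α) ^ (p.1 + p.2 + 2) *
              (c + y (s - (p.1 : ℤ)) (t - (p.2 : ℤ))))| ≤
      ((∑' p : ℕ × ℕ, κ (p.1 + p.2 + 2) * (1 / (ξ * α)) ^ (p.1 + p.2)) *
          (1 / (ξ * α)) ^ 2) * M := by
  intro s t hs ht
  set m : ℕ := max s.natAbs t.natAbs with hm
  set u : ℝ := 1 / (ξ * α) with hu
  have hu0 : 0 < u := by positivity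
  have hM : 0 ≤ M := by
    have h := hxy 0 0 le_rfl le_rfl
    have : (0:ℝ) ≤ ξ ^ (max (0:ℤ).natAbs (0:ℤ).natAbs) * |x 0 0 - y 0 0| := by positivity
    linarith
  have hS : 0 ≤ ∑' p : ℕ × ℕ, κ (p.1 + p.2 + 2) * u ^ (p.1 + p.2) := by
    apply tsum_nonneg
    intro p
    exact mul_nonneg (hκ _ (by omega)) (by positivity)
  -- the difference function
  set f : ℕ × ℕ → ℝ := fun p => κ (p.1 + p.2 + 2) * (1 / α) ^ (p.1 + p.2 + 2) *
    (c + x (s - (p.1 : ℤ)) (t - (p.2 : ℤ))) with hf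
  set g : ℕ × ℕ → ℝ := fun p => κ (p.1 + p.2 + 2) * (1 / α) ^ (p.1 + p.2 + 2) *
    (c + y (s - (p.1 : ℤ)) (t - (p.2 : ℤ))) with hg
  set d : ℕ × ℕ → ℝ := fun p => f p - g p with hd
  set B : ℕ × ℕ → ℝ := fun p => (κ (p.1 + p.2 + 2) * u ^ (p.1 + p.2)) * (u ^ 2 * M) with hB
  have hBsum : Summable B := hconv.mul_right _
  -- key per-term bound
  have hkey : ∀ p : ℕ × ℕ, ξ ^ m * |d p| ≤ B p := by
    intro ⟨p1, p2⟩
    set k : ℕ := max (s - (p1:ℤ)).natAbs (t - (p2:ℤ)).natAbs with hk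
    have hΔ : ξ ^ k * |x (s - (p1:ℤ)) (t - (p2:ℤ)) - y (s - (p1:ℤ)) (t - (p2:ℤ))| ≤ M :=
      hxy _ _ (by omega) (by omega)
    have hkle : k ≤ m + (p1 + p2) := by
      simp only [hk, hm]
      omega
    have hpow : ξ ^ (m + (p1 + p2)) ≤ ξ ^ k :=
      pow_le_pow_of_le_one hξ0.le hξ1.le hkle
    set Δ : ℝ := x (s - (p1:ℤ)) (t - (p2:ℤ)) - y (s - (p1:ℤ)) (t - (p2:ℤ)) with hΔdef
    have hdabs : |d (p1, p2)| = κ (p1 + p2 + 2) * (1 / α) ^ (p1 + p2 + 2) * |Δ| := by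
      have : d (p1, p2) = κ (p1 + p2 + 2) * (1 / α) ^ (p1 + p2 + 2) * Δ := by
        simp only [hd, hf, hg, hΔdef]; ring
      rw [this, abs_mul, abs_of_nonneg (mul_nonneg (hκ _ (by omega)) (by positivity))]
    rw [hdabs]
    have hBval : B (p1, p2) = κ (p1 + p2 + 2) * (u ^ (p1 + p2 + 2) * M) := by
      simp only [hB, pow_add]; ring
    rw [hBval]
    have h1 : ξ ^ m * |Δ| * ξ ^ (p1 + p2) ≤ M := by
      calc ξ ^ m * |Δ| * ξ ^ (p1 + p2) = ξ ^ (m + (p1 + p2)) * |Δ| := by rw [pow_add]; ring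
        _ ≤ ξ ^ k * |Δ| := by
            exact mul_le_mul_of_nonneg_right hpow (abs_nonneg _)
        _ ≤ M := hΔ
    have hu2 : u ^ (p1 + p2 + 2) = (1 / α) ^ (p1 + p2 + 2) * (1 / ξ) ^ (p1 + p2 + 2) := by
      rw [hu, ← mul_pow]; congr 1; field_simp
    rw [hu2]
    have h2 : ξ ^ m * |Δ| ≤ (1 / ξ) ^ (p1 + p2 + 2) * M := by
      rw [one_div, inv_pow, ← div_eq_inv_mul, le_div_iff₀ (pow_pos hξ0 _)]
      calc ξ ^ m * |Δ| * ξ ^ (p1 + p2 + 2)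
          = (ξ ^ m * |Δ| * ξ ^ (p1 + p2)) * ξ ^ 2 := by rw [pow_add]; ring
        _ ≤ M * ξ ^ 2 := mul_le_mul_of_nonneg_right h1 (by positivity)
        _ ≤ M * 1 := by
            apply mul_le_mul_of_nonneg_left _ hM
            calc ξ ^ 2 ≤ 1 ^ 2 := by
                  exact pow_le_pow_left₀ hξ0.le hξ1.le 2
              _ = 1 := one_pow 2
        _ = M := mul_one M
    calc ξ ^ m * (κ (p1 + p2 + 2) * (1 / α) ^ (p1 + p2 + 2) * |Δ|)
        = κ (p1 + p2 + 2) * ((1 / α) ^ (p1 + p2 + 2) * (ξ ^ m * |Δ|)) := by ring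
      _ ≤ κ (p1 + p2 + 2) * ((1 / α) ^ (p1 + p2 + 2) * ((1 / ξ) ^ (p1 + p2 + 2) * M)) := by
          apply mul_le_mul_of_nonneg_left _ (hκ _ (by omega))
          exact mul_le_mul_of_nonneg_left h2 (by positivity)
      _ = κ (p1 + p2 + 2) * ((1 / α) ^ (p1 + p2 + 2) * (1 / ξ) ^ (p1 + p2 + 2) * M) := by ring
  -- summability of |d|
  have hdabs_sum : Summable (fun p => |d p|) := by
    apply Summable.of_nonneg_of_le (fun p => abs_nonneg _) (fun p => ?_)
      (hBsum.mul_left (ξ ^ m)⁻¹)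
    rw [← div_eq_inv_mul, le_div_iff₀ (by positivity : (0:ℝ) < ξ ^ m)]
    calc |d p| * ξ ^ m = ξ ^ m * |d p| := by ring
      _ ≤ B p := hkey p
  have hdsum : Summable d := hdabs_sum.of_abs
  by_cases hfs : Summable f
  · have hgs : Summable g := by
      have := hfs.sub hdsum
      simpa [hd] using this
    have hsub : (∑' p, f p) - (∑' p, g p) = ∑' p, d p := (Summable.tsum_sub hfs hgs).symm
    show ξ ^ m * |(∑' p, f p) - (∑' p, g p)| ≤ _
    rw [hsub]
    have hnorm : Summable (fun p => ‖d p‖) := by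
      simpa only [Real.norm_eq_abs] using hdabs_sum
    have h3 : |∑' p, d p| ≤ ∑' p, |d p| := by
      simpa only [Real.norm_eq_abs] using norm_tsum_le_tsum_norm hnorm
    calc ξ ^ m * |∑' p, d p| ≤ ξ ^ m * ∑' p, |d p| :=
          mul_le_mul_of_nonneg_left h3 (by positivity)
      _ = ∑' p, ξ ^ m * |d p| := (tsum_mul_left (a := ξ ^ m) (f := fun p => |d p|)).symm
      _ ≤ ∑' p, B p := Summable.tsum_le_tsum hkey (hdabs_sum.mul_left _) hBsum
      _ = (∑' p : ℕ × ℕ, κ (p.1 + p.2 + 2) * u ^ (p.1 + p.2)) * (u ^ 2 * M) := tsum_mul_right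
      _ = ((∑' p : ℕ × ℕ, κ (p.1 + p.2 + 2) * u ^ (p.1 + p.2)) * u ^ 2) * M := by ring
  · have hgs : ¬ Summable g := by
      intro hgs
      apply hfs
      have := hgs.add hdsum
      have heq : f = fun p => g p + d p := by funext p; simp [hd]
      rw [heq]; exact this
    show ξ ^ m * |(∑' p, f p) - (∑' p, g p)| ≤ _
    rw [tsum_eq_zero_of_not_summable hfs, tsum_eq_zero_of_not_summable hgs]
    simp only [sub_zero, abs_zero, mul_zero]
    exact mul_nonneg (mul_nonneg hS (by positivity)) hM
end

section
/- Under the hypotheses of the previous statement (κ_{2i} ≥ 0, R convergent at x > 0, T(R(x)) - xT'(R(x))R'(x) > 0 with T(z) = (1+z)(1+γz)), one has 1 - xR'(x) + R(x) > 0 and 1 - γxR'(x) + γR(x) > 0. -/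
/-- Under the hypotheses of Statement 10 (nonnegative cumulants,
`R` and `R'` convergent at `x > 0`, `T(R(x)) - xT'(R(x))R'(x) > 0` with
`T(z) = (1+z)(1+γz)`), one has `1 - xR'(x) + R(x) > 0` and
`1 - γxR'(x) + γR(x) > 0`. -/
theorem stmt11
    (κ : ℕ → ℝ) (hκ : ∀ i : ℕ, 1 ≤ i → 0 ≤ κ (2 * i))
    (γ : ℝ) (hγ0 : 0 < γ) (hγ1 : γ ≤ 1)
    (x Rx Rpx : ℝ) (hx : 0 < x)
    (hR : HasSum (fun i : ℕ => κ (2 * (i + 1)) * x ^ (i + 1)) Rx)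
    (hRp : HasSum (fun i : ℕ => ((i : ℝ) + 1) * κ (2 * (i + 1)) * x ^ i) Rpx)
    (hpos : 0 < (1 + Rx) * (1 + γ * Rx) - x * (1 + γ + 2 * γ * Rx) * Rpx) :
    0 < 1 - x * Rpx + Rx ∧ 0 < 1 - γ * (x * Rpx) + γ * Rx := by
  have hRnn : 0 ≤ Rx := hR.nonneg fun i => by
    have := hκ (i + 1) (by omega)
    positivity
  have hRpnn : 0 ≤ Rpx := hRp.nonneg fun i => by
    have := hκ (i + 1) (by omega)
    have : (0:ℝ) ≤ ((i:ℝ) + 1) * κ (2 * (i + 1)) * x ^ i := by positivity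
    exact this
  -- B := 1 + γRx - γ x Rpx > 0
  have hB : 0 < 1 - γ * (x * Rpx) + γ * Rx := by
    by_contra h
    push_neg at h
    nlinarith [mul_pos hγ0 hpos, sq_nonneg (1 + γ * Rx),
      mul_nonneg (by nlinarith : (0:ℝ) ≤ 1 + γ + 2 * γ * Rx)
        (by linarith : (0:ℝ) ≤ γ * (x * Rpx) - 1 - γ * Rx)]
  refine ⟨?_, hB⟩
  -- A*B = hpos expr + γ (x Rpx)^2 > 0, so A > 0
  nlinarith [sq_nonneg (x * Rpx), mul_nonneg hx.le hRpnn]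
end

section
/- Let (κ_k)_{k≥2} be nonnegative with R'(z) = Σ_{j,k≥0}κ_{j+k+2}z^{j+k} convergent at 1/(ξα) for some ξ ∈ (0,1), α > 0. For T ≥ 1 let (σ̃_{s,t})_{s,t∈[0,T+1]} be symmetric arrays satisfying σ̃_{s,t} = Σ_{j=0}^{s-1}Σ_{k=0}^{t-1} κ_{j+k+2}(1/α)^{j+k+2}(c + σ̃_{s-j-1,t-k-1}) for s,t ≥ 1, with boundary σ̃_{0,0} = a*, σ̃_{0,t} = σ̃_{t,0} = 0 for t ≥ 1, where c ≥ 0 and a* = α²(1-ρ_α²) satisfy c + a* = α² and R'(1/α) = a*. If sup_{0≤s,t≤T}ξ^{max(s,t)}|σ̃_{T+1-s,T+1-t} - a*| → 0 as T → ∞, then S_T := Σ_{i,j=0}^{T}κ_{i+1}κ_{j+1}α^{-(i+j)}(σ̃_{T-j,T-i} + σ̃_{T,T} - σ̃_{T,T-i} - σ̃_{T,T-j}) → 0 as T → ∞. -/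
open Filter

/-- Auxiliary: a double sum bounded termwise by a product bound is bounded by the
product of the single sums. -/
lemma stmt13_dsb (f : ℕ → ℕ → ℝ) (g : ℕ → ℝ) (cst : ℝ) (hc : 0 ≤ cst) (s t : Finset ℕ)
    (h : ∀ i ∈ s, ∀ j ∈ t, f i j ≤ cst * (g i * g j)) :
    ∑ i ∈ s, ∑ j ∈ t, f i j ≤ cst * ((∑ i ∈ s, g i) * (∑ j ∈ t, g j)) := by
  calc ∑ i ∈ s, ∑ j ∈ t, f i j ≤ ∑ i ∈ s, ∑ j ∈ t, cst * (g i * g j) :=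
        Finset.sum_le_sum (fun i hi => Finset.sum_le_sum (fun j hj => h i hi j hj))
    _ = cst * ((∑ i ∈ s, g i) * (∑ j ∈ t, g j)) := by
        rw [Finset.sum_mul_sum]
        simp only [Finset.mul_sum]

set_option maxHeartbeats 1600000 in
/-- If the state-evolution covariance array `σ̃` (satisfying the
first-phase recursion with boundary `σ̃_{0,0} = a*`, `σ̃_{0,t} = 0`) converges to the
fixed point `a*` in the geometrically weighted sup sense, then the weighted double
sum `S_T = Σ_{i,j=0}^{T} κ_{i+1}κ_{j+1}α^{-(i+j)}(σ̃_{T-j,T-i} + σ̃_{T,T} - σ̃_{T,T-i}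
- σ̃_{T,T-j})` tends to `0` as `T → ∞`. -/
theorem stmt13
    (κ : ℕ → ℝ) (hκ : ∀ k : ℕ, 2 ≤ k → 0 ≤ κ k)
    (α ξ c astar : ℝ) (hα : 0 < α) (hξ0 : 0 < ξ) (hξ1 : ξ < 1)
    (hRconv : Summable (fun i : ℕ => κ (i + 1) * (1 / (ξ * α)) ^ i))
    (hRpconv : Summable (fun p : ℕ × ℕ => κ (p.1 + p.2 + 2) * (1 / (ξ * α)) ^ (p.1 + p.2)))
    (hc : 0 ≤ c) (hca : c + astar = α ^ 2)
    (hRp1α : HasSum (fun p : ℕ × ℕ => κ (p.1 + p.2 + 2) * (1 / α) ^ (p.1 + p.2)) astar)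
    (σ : ℕ → ℕ → ℝ)
    (hsymm : ∀ s t : ℕ, σ s t = σ t s)
    (hrec : ∀ s t : ℕ, 1 ≤ s → 1 ≤ t →
      σ s t = ∑ j ∈ Finset.range s, ∑ k ∈ Finset.range t,
        κ (j + k + 2) * (1 / α) ^ (j + k + 2) * (c + σ (s - j - 1) (t - k - 1)))
    (hσ00 : σ 0 0 = astar)
    (hσ0t : ∀ t : ℕ, 1 ≤ t → σ 0 t = 0)
    (hsup : ∀ ε : ℝ, 0 < ε → ∃ T₀ : ℕ, ∀ T : ℕ, T₀ ≤ T →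
      ∀ s t : ℕ, s ≤ T → t ≤ T →
        ξ ^ (max s t) * |σ (T + 1 - s) (T + 1 - t) - astar| < ε) :
    Tendsto (fun T : ℕ =>
        ∑ i ∈ Finset.range (T + 1), ∑ j ∈ Finset.range (T + 1),
          κ (i + 1) * κ (j + 1) * (1 / α) ^ (i + j) *
            (σ (T - j) (T - i) + σ T T - σ T (T - i) - σ T (T - j)))
      atTop (nhds 0) := by
  have hinvξ : (1:ℝ) ≤ 1/ξ := by rw [le_div_iff₀ hξ0]; linarith
  have hξs : ∀ s : ℕ, (1:ℝ) ≤ (1/ξ)^s := by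
    intro s
    calc (1:ℝ) = (1/ξ)^0 := (pow_zero _).symm
      _ ≤ (1/ξ)^s := pow_le_pow_right₀ hinvξ (Nat.zero_le s)
  set g : ℕ → ℝ := fun i => |κ (i+1)| * (1/(ξ*α))^i with hgdef
  have hg0 : ∀ i, 0 ≤ g i := fun i => mul_nonneg (abs_nonneg _) (by positivity)
  have hgsum : Summable g := by
    have h := hRconv.abs
    refine h.congr fun i => ?_
    rw [abs_mul, abs_of_nonneg (by positivity : (0:ℝ) ≤ (1/(ξ*α))^i)]
  set C : ℝ := ∑' i, g i with hCdef
  have hC0 : 0 ≤ C := tsum_nonneg hg0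
  have hpart : ∀ s : Finset ℕ, ∑ i ∈ s, g i ≤ C :=
    fun s => Summable.sum_le_tsum s (fun i _ => hg0 i) hgsum
  have hgleC : ∀ i, g i ≤ C := fun i => Summable.le_tsum hgsum i (fun j _ => hg0 j)
  have hgto0 : Tendsto g atTop (nhds 0) := hgsum.tendsto_atTop_zero
  set M : ℝ := max 1 |astar| with hMdef
  have hM1 : (1:ℝ) ≤ M := le_max_left _ _
  have hM0 : (0:ℝ) ≤ M := le_trans zero_le_one hM1
  -- ε-bound from the hypothesis
  have hεbd : ∀ ε : ℝ, 0 < ε → ∃ T₀ : ℕ, ∀ T, T₀ ≤ T → ∀ s t : ℕ, s ≤ T → t ≤ T →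
      |σ (T+1-s) (T+1-t) - astar| ≤ ε * (1/ξ)^s * (1/ξ)^t := by
    intro ε hε
    obtain ⟨T₀, h⟩ := hsup ε hε
    refine ⟨T₀, fun T hT s t hs ht => ?_⟩
    have h1 := h T hT s t hs ht
    have hm : (0:ℝ) < ξ^(max s t) := pow_pos hξ0 _
    have h2 : |σ (T+1-s) (T+1-t) - astar| ≤ ε * (1/ξ)^(max s t) := by
      rw [one_div, inv_pow, ← div_eq_mul_inv, le_div_iff₀ hm]
      nlinarith [h1]
    calc |σ (T+1-s) (T+1-t) - astar| ≤ ε * (1/ξ)^(max s t) := h2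
      _ ≤ ε * ((1/ξ)^s * (1/ξ)^t) := by
          rw [← pow_add]
          exact mul_le_mul_of_nonneg_left (pow_le_pow_right₀ hinvξ (by omega)) hε.le
      _ = ε * (1/ξ)^s * (1/ξ)^t := by ring
  obtain ⟨T₁, hT₁⟩ := hεbd 1 one_pos
  have hzero : ∀ m : ℕ, |σ 0 m - astar| ≤ M := by
    intro m
    match m with
    | 0 =>
      rw [hσ00]
      simpa using hM0
    | (k+1) =>
      rw [hσ0t (k+1) (Nat.succ_le_succ (Nat.zero_le k))]
      calc |0 - astar| = |astar| := by simp
        _ ≤ M := le_max_right _ _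
  -- uniform M-bound for large T
  have hMbd : ∀ T, T₁ ≤ T → ∀ s t : ℕ, s ≤ T+1 → t ≤ T+1 →
      |σ (T+1-s) (T+1-t) - astar| ≤ M * (1/ξ)^s * (1/ξ)^t := by
    intro T hT s t hs ht
    by_cases hs' : s ≤ T
    · by_cases ht' : t ≤ T
      · have h := hT₁ T hT s t hs' ht'
        have hxy : (0:ℝ) ≤ (1/ξ)^s*(1/ξ)^t := by positivity
        nlinarith [h, hM1, hxy]
      · have ht'' : T+1-t = 0 := by omega
        have hxy1 : (1:ℝ) ≤ (1/ξ)^s*(1/ξ)^t := by nlinarith [hξs s, hξs t]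
        rw [ht'', hsymm]
        calc |σ 0 (T+1-s) - astar| ≤ M := hzero _
          _ ≤ M * (1/ξ)^s * (1/ξ)^t := by nlinarith [hM0, hxy1]
    · have hs'' : T+1-s = 0 := by omega
      have hxy1 : (1:ℝ) ≤ (1/ξ)^s*(1/ξ)^t := by nlinarith [hξs s, hξs t]
      rw [hs'']
      calc |σ 0 (T+1-t) - astar| ≤ M := hzero _
        _ ≤ M * (1/ξ)^s * (1/ξ)^t := by nlinarith [hM0, hxy1]
  -- monotonicity helper
  have hmono : ∀ (cst : ℝ), 0 ≤ cst → ∀ s s' t t' : ℕ, s ≤ s' → t ≤ t' →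
      cst*(1/ξ)^s*(1/ξ)^t ≤ cst*(1/ξ)^s'*(1/ξ)^t' := by
    intro cst hcst s s' t t' hss htt
    have p1 := pow_le_pow_right₀ hinvξ hss
    have p2 := pow_le_pow_right₀ hinvξ htt
    calc cst*(1/ξ)^s*(1/ξ)^t = cst*((1/ξ)^s*(1/ξ)^t) := by ring
      _ ≤ cst*((1/ξ)^s'*(1/ξ)^t') :=
          mul_le_mul_of_nonneg_left
            (mul_le_mul p1 p2 (by positivity) (by positivity)) hcst
      _ = cst*(1/ξ)^s'*(1/ξ)^t' := by ring
  -- pure algebra bound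
  have halg : ∀ (B : ℝ) (T i j : ℕ),
      |σ (T-j) (T-i) - astar| ≤ B → |σ T T - astar| ≤ B →
      |σ T (T-i) - astar| ≤ B → |σ T (T-j) - astar| ≤ B →
      |κ (i+1) * κ (j+1) * (1/α)^(i+j) *
          (σ (T-j) (T-i) + σ T T - σ T (T-i) - σ T (T-j))|
        ≤ |κ (i+1)| * |κ (j+1)| * ((1/α)^(i+j)) * (4*B) := by
    intro B T i j h1 h2 h3 h4
    have hX : |σ (T-j) (T-i) + σ T T - σ T (T-i) - σ T (T-j)| ≤ 4*B := by
      have e : σ (T-j) (T-i) + σ T T - σ T (T-i) - σ T (T-j)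
          = (σ (T-j) (T-i) - astar) + (σ T T - astar)
            - (σ T (T-i) - astar) - (σ T (T-j) - astar) := by ring
      rw [e, abs_le]
      constructor
      · nlinarith [abs_le.1 h1, abs_le.1 h2, abs_le.1 h3, abs_le.1 h4]
      · nlinarith [abs_le.1 h1, abs_le.1 h2, abs_le.1 h3, abs_le.1 h4]
    calc |κ (i+1) * κ (j+1) * (1/α)^(i+j) *
            (σ (T-j) (T-i) + σ T T - σ T (T-i) - σ T (T-j))|
        = |κ (i+1)| * |κ (j+1)| * ((1/α)^(i+j)) *
            |σ (T-j) (T-i) + σ T T - σ T (T-i) - σ T (T-j)| := by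
          rw [abs_mul, abs_mul, abs_mul, abs_of_nonneg (by positivity : (0:ℝ) ≤ (1/α)^(i+j))]
      _ ≤ |κ (i+1)| * |κ (j+1)| * ((1/α)^(i+j)) * (4*B) := by
          apply mul_le_mul_of_nonneg_left hX (by positivity)
  -- rewrite of the bound into g-form
  have hrw : ∀ (B₀ : ℝ) (i j : ℕ),
      |κ (i+1)| * |κ (j+1)| * ((1/α)^(i+j)) * (4*(B₀*(1/ξ)^(i+1)*(1/ξ)^(j+1)))
        = 4*B₀*(1/ξ)^2*(g i * g j) := by
    intro B₀ i j
    have hξα : (1:ℝ)/(ξ*α) = (1/ξ)*(1/α) := by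
      rw [div_mul_div_comm, one_mul]
    simp only [hgdef]
    rw [hξα]
    ring
  -- general term bound
  have hbdgen : ∀ (cst : ℝ), 0 ≤ cst → ∀ T i j : ℕ,
      |σ (T-j) (T-i) - astar| ≤ cst*(1/ξ)^(j+1)*(1/ξ)^(i+1) →
      |σ T T - astar| ≤ cst*(1/ξ)^1*(1/ξ)^1 →
      |σ T (T-i) - astar| ≤ cst*(1/ξ)^1*(1/ξ)^(i+1) →
      |σ T (T-j) - astar| ≤ cst*(1/ξ)^1*(1/ξ)^(j+1) →
      |κ (i+1) * κ (j+1) * (1/α)^(i+j) *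
          (σ (T-j) (T-i) + σ T T - σ T (T-i) - σ T (T-j))|
        ≤ 4*cst*(1/ξ)^2*(g i * g j) := by
    intro cst hcst T i j h1 h2 h3 h4
    have b1 : |σ (T-j) (T-i) - astar| ≤ cst*(1/ξ)^(i+1)*(1/ξ)^(j+1) :=
      le_of_le_of_eq h1 (by ring)
    have b2 : |σ T T - astar| ≤ cst*(1/ξ)^(i+1)*(1/ξ)^(j+1) :=
      le_trans h2 (hmono cst hcst 1 (i+1) 1 (j+1) (by omega) (by omega))
    have b3 : |σ T (T-i) - astar| ≤ cst*(1/ξ)^(i+1)*(1/ξ)^(j+1) := by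
      calc |σ T (T-i) - astar| ≤ cst*(1/ξ)^1*(1/ξ)^(i+1) := h3
        _ ≤ cst*(1/ξ)^(j+1)*(1/ξ)^(i+1) :=
            hmono cst hcst 1 (j+1) (i+1) (i+1) (by omega) le_rfl
        _ = cst*(1/ξ)^(i+1)*(1/ξ)^(j+1) := by ring
    have b4 : |σ T (T-j) - astar| ≤ cst*(1/ξ)^(i+1)*(1/ξ)^(j+1) :=
      le_trans h4 (hmono cst hcst 1 (i+1) (j+1) (j+1) (by omega) le_rfl)
    have h := halg (cst*(1/ξ)^(i+1)*(1/ξ)^(j+1)) T i j b1 b2 b3 b4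
    calc |κ (i+1) * κ (j+1) * (1/α)^(i+j) *
            (σ (T-j) (T-i) + σ T T - σ T (T-i) - σ T (T-j))|
        ≤ |κ (i+1)| * |κ (j+1)| * ((1/α)^(i+j))
            * (4*(cst*(1/ξ)^(i+1)*(1/ξ)^(j+1))) := h
      _ = 4*cst*(1/ξ)^2*(g i * g j) := hrw cst i j
  -- M-bound on terms
  have hbdM : ∀ T, T₁ ≤ T → ∀ i j : ℕ, i ≤ T → j ≤ T →
      |κ (i+1) * κ (j+1) * (1/α)^(i+j) *
          (σ (T-j) (T-i) + σ T T - σ T (T-i) - σ T (T-j))|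
        ≤ 4*M*(1/ξ)^2*(g i * g j) := by
    intro T hT i j hi hj
    have h1 := hMbd T hT (j+1) (i+1) (by omega) (by omega)
    have h2 := hMbd T hT 1 1 (by omega) (by omega)
    have h3 := hMbd T hT 1 (i+1) (by omega) (by omega)
    have h4 := hMbd T hT 1 (j+1) (by omega) (by omega)
    have e1 : T+1-(j+1) = T-j := by omega
    have e2 : T+1-(i+1) = T-i := by omega
    have e3 : T+1-1 = T := by omega
    rw [e1, e2] at h1
    rw [e3] at h2 h3 h4
    rw [e2] at h3
    rw [e1] at h4
    exact hbdgen M hM0 T i j h1 h2 h3 h4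
  -- main argument
  rw [Metric.tendsto_atTop]
  intro ε hε
  have hCp : (0:ℝ) < C + 1 := by linarith
  have hξp : (0:ℝ) < (1/ξ)^2 := by positivity
  have hMp : (0:ℝ) < M := lt_of_lt_of_le one_pos hM1
  set Dδ : ℝ := ε/(16*(1/ξ)^2*(C+1)^2) with hDδdef
  have hDδ : 0 < Dδ := by
    apply div_pos hε
    positivity
  obtain ⟨T₀, hT₀⟩ := hεbd Dδ hDδ
  have hbdδ : ∀ T, T₀ ≤ T → ∀ i j : ℕ, i < T → j < T →
      |κ (i+1) * κ (j+1) * (1/α)^(i+j) *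
          (σ (T-j) (T-i) + σ T T - σ T (T-i) - σ T (T-j))|
        ≤ 4*Dδ*(1/ξ)^2*(g i * g j) := by
    intro T hT i j hi hj
    have h1 := hT₀ T hT (j+1) (i+1) (by omega) (by omega)
    have h2 := hT₀ T hT 1 1 (by omega) (by omega)
    have h3 := hT₀ T hT 1 (i+1) (by omega) (by omega)
    have h4 := hT₀ T hT 1 (j+1) (by omega) (by omega)
    have e1 : T+1-(j+1) = T-j := by omega
    have e2 : T+1-(i+1) = T-i := by omega
    have e3 : T+1-1 = T := by omega
    rw [e1, e2] at h1
    rw [e3] at h2 h3 h4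
    rw [e2] at h3
    rw [e1] at h4
    exact hbdgen Dδ hDδ.le T i j h1 h2 h3 h4
  set δ2 : ℝ := ε/(32*M*(1/ξ)^2*(C+1)) with hδ2def
  have hδ2 : 0 < δ2 := by
    apply div_pos hε
    positivity
  obtain ⟨N, hN⟩ := eventually_atTop.1 (hgto0.eventually_lt_const hδ2)
  refine ⟨max (max T₀ T₁) N, fun T hT => ?_⟩
  have hTT₀ : T₀ ≤ T := le_trans (le_trans (le_max_left _ _) (le_max_left _ _)) hT
  have hTT₁ : T₁ ≤ T := le_trans (le_trans (le_max_right _ _) (le_max_left _ _)) hT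
  have hgT : g T < δ2 := hN T (le_trans (le_max_right _ _) hT)
  rw [Real.dist_eq, sub_zero]
  set f : ℕ → ℕ → ℝ := fun i j =>
    |κ (i+1) * κ (j+1) * (1/α)^(i+j) *
        (σ (T-j) (T-i) + σ T T - σ T (T-i) - σ T (T-j))| with hfdef
  have hcM : (0:ℝ) < 4*M*(1/ξ)^2 := by positivity
  have hcD : (0:ℝ) ≤ 4*Dδ*(1/ξ)^2 := by positivity
  -- step 1: bound by sum of absolute values
  have step1 : |∑ i ∈ Finset.range (T + 1), ∑ j ∈ Finset.range (T + 1),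
        κ (i + 1) * κ (j + 1) * (1 / α) ^ (i + j) *
          (σ (T - j) (T - i) + σ T T - σ T (T - i) - σ T (T - j))|
      ≤ ∑ i ∈ Finset.range (T+1), ∑ j ∈ Finset.range (T+1), f i j := by
    calc |∑ i ∈ Finset.range (T + 1), ∑ j ∈ Finset.range (T + 1),
          κ (i + 1) * κ (j + 1) * (1 / α) ^ (i + j) *
            (σ (T - j) (T - i) + σ T T - σ T (T - i) - σ T (T - j))|
        ≤ ∑ i ∈ Finset.range (T+1), |∑ j ∈ Finset.range (T + 1),
            κ (i + 1) * κ (j + 1) * (1 / α) ^ (i + j) *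
              (σ (T - j) (T - i) + σ T T - σ T (T - i) - σ T (T - j))| :=
          Finset.abs_sum_le_sum_abs _ _
      _ ≤ ∑ i ∈ Finset.range (T+1), ∑ j ∈ Finset.range (T+1), f i j :=
          Finset.sum_le_sum (fun i _ => Finset.abs_sum_le_sum_abs _ _)
  -- split off the last row and column
  have split : ∑ i ∈ Finset.range (T+1), ∑ j ∈ Finset.range (T+1), f i j
      = (∑ i ∈ Finset.range T, ∑ j ∈ Finset.range T, f i j)
        + (∑ i ∈ Finset.range T, f i T)
        + (∑ j ∈ Finset.range T, f T j) + f T T := by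
    simp only [Finset.sum_range_succ, Finset.sum_add_distrib]
    ring
  -- interior bound
  have hA : ∑ i ∈ Finset.range T, ∑ j ∈ Finset.range T, f i j
      ≤ 4*Dδ*(1/ξ)^2*(C*C) := by
    have h := stmt13_dsb f g (4*Dδ*(1/ξ)^2) hcD (Finset.range T) (Finset.range T)
      (fun i hi j hj => hbdδ T hTT₀ i j (Finset.mem_range.1 hi) (Finset.mem_range.1 hj))
    have hs0 : 0 ≤ ∑ i ∈ Finset.range T, g i := Finset.sum_nonneg (fun i _ => hg0 i)
    have hsC := hpart (Finset.range T)
    nlinarith [mul_le_mul hsC hsC hs0 hC0]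
  -- last column bound
  have hB : ∑ i ∈ Finset.range T, f i T ≤ 4*M*(1/ξ)^2*(C*(g T)) := by
    have h := stmt13_dsb f g (4*M*(1/ξ)^2) hcM.le (Finset.range T) {T}
      (fun i hi j hj => by
        rw [Finset.mem_singleton.1 hj]
        exact hbdM T hTT₁ i T (le_of_lt (Finset.mem_range.1 hi)) le_rfl)
    simp only [Finset.sum_singleton] at h
    have hs0 : 0 ≤ ∑ i ∈ Finset.range T, g i := Finset.sum_nonneg (fun i _ => hg0 i)
    have hsC := hpart (Finset.range T)
    nlinarith [mul_le_mul_of_nonneg_right hsC (hg0 T)]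
  -- last row bound
  have hC' : ∑ j ∈ Finset.range T, f T j ≤ 4*M*(1/ξ)^2*(C*(g T)) := by
    have h := stmt13_dsb f g (4*M*(1/ξ)^2) hcM.le {T} (Finset.range T)
      (fun i hi j hj => by
        rw [Finset.mem_singleton.1 hi]
        exact hbdM T hTT₁ T j le_rfl (le_of_lt (Finset.mem_range.1 hj)))
    simp only [Finset.sum_singleton] at h
    have hsC := hpart (Finset.range T)
    nlinarith [mul_le_mul_of_nonneg_left hsC (hg0 T)]
  -- corner bound
  have hD : f T T ≤ 4*M*(1/ξ)^2*(C*(g T)) := by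
    have h := hbdM T hTT₁ T T le_rfl le_rfl
    have := hgleC T
    nlinarith [mul_le_mul_of_nonneg_right (hgleC T) (hg0 T)]
  -- numeric: interior part
  have e1 : 4*Dδ*(1/ξ)^2*(C*C) ≤ ε/4 := by
    have key : 4*Dδ*(1/ξ)^2*(C*C) = ε*(C*C)/(4*(C+1)^2) := by
      rw [hDδdef]
      field_simp
      ring
    rw [key, div_le_div_iff₀ (by positivity) (by norm_num)]
    nlinarith [hC0, hε.le]
  -- numeric: edge part
  have e2 : 4*M*(1/ξ)^2*(C*(g T)) < ε/8 := by
    have k1 : C * g T < (C+1)*δ2 := by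
      nlinarith [mul_pos hCp (sub_pos.2 hgT), hg0 T]
    have k2 : 4*M*(1/ξ)^2*((C+1)*δ2) = ε/8 := by
      rw [hδ2def]
      field_simp
      ring
    nlinarith [mul_lt_mul_of_pos_left k1 hcM]
  calc |∑ i ∈ Finset.range (T + 1), ∑ j ∈ Finset.range (T + 1),
        κ (i + 1) * κ (j + 1) * (1 / α) ^ (i + j) *
          (σ (T - j) (T - i) + σ T T - σ T (T - i) - σ T (T - j))|
      ≤ ∑ i ∈ Finset.range (T+1), ∑ j ∈ Finset.range (T+1), f i j := step1
    _ = (∑ i ∈ Finset.range T, ∑ j ∈ Finset.range T, f i j)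
        + (∑ i ∈ Finset.range T, f i T)
        + (∑ j ∈ Finset.range T, f T j) + f T T := split
    _ < ε := by linarith
end
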